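/- arXiv:2501.09852 — 3 statements merged into one kernel-verified Lean document; each statement's English description precedes it below -/
import Mathlib

section
/- Assume n is odd, n ≥ 3, and a = −c ≠ 0 (so a + c = 0 and a − c ≠ 0). If X ∈ F_{q^2} satisfies X^q ≠ X and f^(j)(X) = X for some integer j ≥ 1, then τ0 divides j. -/
lemma aux_geom (n : ℕ) (hn : 1 ≤ n) : ∀ j : ℕ, (n - 1) * ∑ i ∈ Finset.range j, n ^ i = n ^ j - 1 := by
  intro j
  induction j with
  | zero => simp
  | succ k ih =>
    rw [Finset.sum_range_succ, Nat.mul_add, ih, pow_succ]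
    have h1 : 1 ≤ n ^ k := Nat.one_le_pow _ _ hn
    have h2 : (n - 1) * n ^ k = n ^ k * n - n ^ k := by
      rw [Nat.sub_mul, one_mul, Nat.mul_comm]
    have h3 : n ^ k ≤ n ^ k * n := Nat.le_mul_of_pos_right _ hn
    omega

lemma aux_val_le_of_dvd (p a b : ℕ) [Fact p.Prime] (hb : b ≠ 0) (h : a ∣ b) :
    padicValNat p a ≤ padicValNat p b :=
  (padicValNat_dvd_iff_le hb).1 (dvd_trans pow_padicValNat_dvd h)

lemma aux_prod_dvd (s : Finset ℕ) (e : ℕ → ℕ) (j : ℕ)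
    (hs : ∀ ℓ ∈ s, ℓ.Prime) (h : ∀ ℓ ∈ s, ℓ ^ e ℓ ∣ j) :
    (∏ ℓ ∈ s, ℓ ^ e ℓ) ∣ j := by
  induction s using Finset.induction with
  | empty => simp
  | @insert ℓ0 s0 hnotmem ih =>
    rw [Finset.prod_insert hnotmem]
    have hcop : Nat.Coprime (ℓ0 ^ e ℓ0) (∏ ℓ ∈ s0, ℓ ^ e ℓ) := by
      apply Nat.Coprime.pow_left
      apply Nat.Coprime.prod_right
      intro ℓ hℓ
      apply Nat.Coprime.pow_right
      exact (Nat.coprime_primes (hs ℓ0 (Finset.mem_insert_self _ _))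
        (hs ℓ (Finset.mem_insert_of_mem hℓ))).2 (by rintro rfl; exact hnotmem hℓ)
    exact hcop.mul_dvd_of_dvd_of_dvd (h ℓ0 (Finset.mem_insert_self _ _))
      (ih (fun ℓ hℓ => hs ℓ (Finset.mem_insert_of_mem hℓ))
          (fun ℓ hℓ => h ℓ (Finset.mem_insert_of_mem hℓ)))

lemma aux_nt (q n l0 j r ε0 : ℕ)
    (hq3 : 3 ≤ q) (hqodd : Odd q)
    (hn3 : 3 ≤ n) (hnodd : Odd n) (hj : 1 ≤ j)
    (hgcd : Nat.gcd (n - 1) l0 ≠ n - 1)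
    (hdvd : (q - 1) ∣ (∑ i ∈ Finset.range j, n ^ i) * (l0 + r * (n - 1)))
    (hε0a : Even l0 → ε0 = 0)
    (hε0b : Odd l0 → ε0 = padicValNat 2 (q - 1) - padicValNat 2 ((n + 1) / 2)) :
    (2 ^ ε0 *
        ∏ ℓ ∈ ((n - 1) / Nat.gcd (n - 1) l0).primeFactors.erase 2,
          ℓ ^ (padicValNat ℓ (q - 1) - padicValNat ℓ l0)) ∣ j := by
  have hn1 : n - 1 ≠ 0 := by omega
  have hl0 : l0 ≠ 0 := by rintro rfl; exact hgcd (Nat.gcd_zero_right _)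
  have hj0 : j ≠ 0 := by omega
  have hq1 : q - 1 ≠ 0 := by omega
  have h2q : 2 ∣ q - 1 := by
    obtain ⟨k, hk⟩ := hqodd; omega
  set E := ∑ i ∈ Finset.range j, n ^ i with hE
  set K := l0 + r * (n - 1) with hK
  have hK0 : K ≠ 0 := by positivity
  have hnj1 : n ^ j - 1 ≠ 0 := by
    have : 3 ≤ n ^ j := le_trans hn3 (Nat.le_self_pow hj0 n)
    omega
  have hE0 : E ≠ 0 := by
    intro h
    have := aux_geom n (by omega) j
    rw [← hE, h, Nat.mul_zero] at this
    exact hnj1 this.symm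
  have hbig : (q - 1) * (n - 1) ∣ (n ^ j - 1) * K := by
    rw [← aux_geom n (by omega) j, ← hE]
    calc (q - 1) * (n - 1) ∣ (E * K) * (n - 1) := Nat.mul_dvd_mul_right hdvd _
    _ = (n - 1) * E * K := by ring
  have hn2even : 2 ∣ n - 1 := by obtain ⟨k, hk⟩ := hnodd; omega
  -- parity of E equals parity of j
  have hEmod : E % 2 = j % 2 := by
    rw [hE, Finset.sum_nat_mod]
    have : ∀ i ∈ Finset.range j, n ^ i % 2 = 1 := by
      intro i _
      rw [Nat.odd_iff.1 (hnodd.pow)]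
    rw [Finset.sum_congr rfl this]
    simp
  haveI : Fact (Nat.Prime 2) := ⟨Nat.prime_two⟩
  -- Part 1 : 2 ^ ε0 ∣ j
  have part1 : 2 ^ ε0 ∣ j := by
    rcases Nat.even_or_odd l0 with hpar | hpar
    · rw [hε0a hpar]; simp
    · rw [hε0b hpar]
      have hKodd : K % 2 = 1 := by
        have hrev : Even (r * (n - 1)) := Dvd.dvd.mul_left hn2even r |> even_iff_two_dvd.2
        exact Nat.odd_iff.1 (hpar.add_even hrev)
      have hjeven : Even j := by
        by_contra hodd
        have hjodd : j % 2 = 1 := Nat.odd_iff.1 (Nat.not_even_iff_odd.1 hodd)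
        have hEodd : E % 2 = 1 := by rw [hEmod]; omega
        have h2EK : 2 ∣ E * K := dvd_trans h2q hdvd
        rw [Nat.dvd_iff_mod_eq_zero, Nat.mul_mod, hEodd, hKodd] at h2EK
        simp at h2EK
      -- LTE at 2
      have hlte : padicValNat 2 (n ^ j - 1 ^ j) + 1 =
          padicValNat 2 (n + 1) + padicValNat 2 (n - 1) + padicValNat 2 j :=
        padicValNat.pow_two_sub_pow (by omega) (by simpa using hn2even)
          (by simp [Nat.two_dvd_ne_zero, Nat.odd_iff.1 hnodd]) hj0 hjeven
      rw [one_pow] at hlte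
      have hval : padicValNat 2 (q - 1) + padicValNat 2 (n - 1) ≤
          padicValNat 2 (n ^ j - 1) + padicValNat 2 K := by
        have := aux_val_le_of_dvd 2 ((q - 1) * (n - 1)) ((n ^ j - 1) * K)
          (by positivity) hbig
        rwa [padicValNat.mul hq1 hn1, padicValNat.mul hnj1 hK0] at this
      have hKval : padicValNat 2 K = 0 :=
        padicValNat.eq_zero_of_not_dvd (by omega)
      have hdiv2 : padicValNat 2 ((n + 1) / 2) = padicValNat 2 (n + 1) - 1 :=
        padicValNat.div (by omega)
      have hge1 : 1 ≤ padicValNat 2 (n + 1) :=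
        one_le_padicValNat_of_dvd (by omega) (by omega)
      have : padicValNat 2 (q - 1) - padicValNat 2 ((n + 1) / 2) ≤ padicValNat 2 j := by
        omega
      exact (padicValNat_dvd_iff_le hj0).2 this
  -- Part 2 : odd prime powers divide j
  have part2 : ∀ ℓ ∈ ((n - 1) / Nat.gcd (n - 1) l0).primeFactors.erase 2,
      ℓ ^ (padicValNat ℓ (q - 1) - padicValNat ℓ l0) ∣ j := by
    intro ℓ hmem
    obtain ⟨hℓ2, hmem'⟩ := Finset.mem_erase.1 hmem
    have hℓp : ℓ.Prime := Nat.prime_of_mem_primeFactors hmem'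
    haveI : Fact ℓ.Prime := ⟨hℓp⟩
    have hℓodd : Odd ℓ := hℓp.odd_of_ne_two hℓ2
    set d := Nat.gcd (n - 1) l0 with hd
    have hd0 : d ≠ 0 := Nat.gcd_ne_zero_left hn1
    have hddvd : d ∣ n - 1 := Nat.gcd_dvd_left _ _
    have hquot0 : (n - 1) / d ≠ 0 := by
      have := Nat.le_of_dvd (by omega) hddvd
      have := Nat.div_pos this (Nat.pos_of_ne_zero hd0)
      omega
    have hℓdvd : ℓ ∣ (n - 1) / d := Nat.dvd_of_mem_primeFactors hmem'
    -- ν_ℓ l0 < ν_ℓ (n-1)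
    have hlt : padicValNat ℓ l0 < padicValNat ℓ (n - 1) := by
      have h1 : 1 ≤ padicValNat ℓ ((n - 1) / d) :=
        one_le_padicValNat_of_dvd hquot0 hℓdvd
      have h2 : padicValNat ℓ ((n - 1) / d) = padicValNat ℓ (n - 1) - padicValNat ℓ d := by
        have := Nat.factorization_div hddvd
        have happ := DFunLike.congr_fun this ℓ
        simpa [Nat.factorization_def _ hℓp, Finsupp.sub_apply] using happ
      have h3 : padicValNat ℓ d = min (padicValNat ℓ (n - 1)) (padicValNat ℓ l0) := by
        have := Nat.factorization_gcd hn1 hl0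
        have happ := DFunLike.congr_fun this ℓ
        simpa [Nat.factorization_def _ hℓp, Finsupp.inf_apply] using happ
      omega
    -- ν_ℓ K ≤ ν_ℓ l0
    have hKle : padicValNat ℓ K ≤ padicValNat ℓ l0 := by
      by_contra hcon
      push_neg at hcon
      have hdK : ℓ ^ (padicValNat ℓ l0 + 1) ∣ K :=
        (padicValNat_dvd_iff_le hK0).2 hcon
      have hdn : ℓ ^ (padicValNat ℓ l0 + 1) ∣ n - 1 :=
        (padicValNat_dvd_iff_le hn1).2 hlt
      have hdl : ℓ ^ (padicValNat ℓ l0 + 1) ∣ l0 := by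
        have hsub : ℓ ^ (padicValNat ℓ l0 + 1) ∣ K - r * (n - 1) :=
          Nat.dvd_sub hdK (Dvd.dvd.mul_left hdn r)
        have heq : K - r * (n - 1) = l0 := by omega
        rwa [heq] at hsub
      have := (padicValNat_dvd_iff_le hl0).1 hdl
      omega
    -- LTE at ℓ
    have hℓn1 : ℓ ∣ n - 1 := dvd_of_one_le_padicValNat (by omega)
    have hℓn : ¬ ℓ ∣ n := by
      intro h
      have h1 : ℓ ∣ n - (n - 1) := Nat.dvd_sub h hℓn1
      have h2 : n - (n - 1) = 1 := by omega
      rw [h2] at h1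
      exact hℓp.one_lt.ne' (Nat.eq_one_of_dvd_one h1 ▸ rfl)
    have hlte : padicValNat ℓ (n ^ j - 1 ^ j) = padicValNat ℓ (n - 1) + padicValNat ℓ j :=
      padicValNat.pow_sub_pow hℓodd (by omega) (by simpa using hℓn1) (by simpa using hℓn) hj0
    rw [one_pow] at hlte
    have hval : padicValNat ℓ (q - 1) + padicValNat ℓ (n - 1) ≤
        padicValNat ℓ (n ^ j - 1) + padicValNat ℓ K := by
      have := aux_val_le_of_dvd ℓ ((q - 1) * (n - 1)) ((n ^ j - 1) * K)
        (by positivity) hbig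
      rwa [padicValNat.mul hq1 hn1, padicValNat.mul hnj1 hK0] at this
    have : padicValNat ℓ (q - 1) - padicValNat ℓ l0 ≤ padicValNat ℓ j := by omega
    exact (padicValNat_dvd_iff_le hj0).2 this
  -- combine
  have hcop : Nat.Coprime (2 ^ ε0)
      (∏ ℓ ∈ ((n - 1) / Nat.gcd (n - 1) l0).primeFactors.erase 2,
        ℓ ^ (padicValNat ℓ (q - 1) - padicValNat ℓ l0)) := by
    apply Nat.Coprime.pow_left
    apply Nat.Coprime.prod_right
    intro ℓ hℓ
    apply Nat.Coprime.pow_right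
    obtain ⟨hℓ2, hmem'⟩ := Finset.mem_erase.1 hℓ
    exact (Nat.coprime_primes Nat.prime_two (Nat.prime_of_mem_primeFactors hmem')).2
      (Ne.symm hℓ2)
  refine hcop.mul_dvd_of_dvd_of_dvd part1 ?_
  exact aux_prod_dvd _ _ _
    (fun ℓ hℓ => Nat.prime_of_mem_primeFactors (Finset.mem_erase.1 hℓ).2) part2

/-- `n` odd, `n ≥ 3`, `a = -c ≠ 0`. If `X^q ≠ X` and `f^(j)(X) = X` for
some `j ≥ 1`, then `τ0 ∣ j`. -/
theorem stmt_14 (p s q : ℕ) (hp : p.Prime) (hpodd : p ≠ 2) (hs : 0 < s) (hq : q = p ^ s)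
    (F : Type*) [Field F] [Fintype F] (hF : Fintype.card F = q ^ 2)
    (a c : F) (ha : a ^ q = a) (hc : c ^ q = c)
    (n : ℕ) (hn3 : 3 ≤ n) (hnodd : Odd n)
    (hac : a = -c) (hc0 : c ≠ 0)
    (f : F → F) (hf : ∀ X, f X = (c * X ^ q + a * X) * (X ^ q - X) ^ (n - 1))
    (β : F) (hβ : β ^ q ≠ β) (hβsq : (β ^ 2) ^ q = β ^ 2)
    (α : F) (hαq : α ^ q = α) (hα0 : α ≠ 0) (hαord : orderOf α = q - 1)
    (l0 : ℕ) (hl0 : (4 * β ^ 2) ^ ((n - 1) / 2) * (a - c) = α ^ l0)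
    (hl0min : ∀ m : ℕ, (4 * β ^ 2) ^ ((n - 1) / 2) * (a - c) = α ^ m → l0 ≤ m)
    (ε0 : ℕ)
    (hε0a : Even l0 → ε0 = 0)
    (hε0b : Odd l0 → ε0 = padicValNat 2 (q - 1) - padicValNat 2 ((n + 1) / 2))
    (τ0 : ℕ)
    (hτ0a : Nat.gcd (n - 1) l0 = n - 1 → τ0 = 1)
    (hτ0b : Nat.gcd (n - 1) l0 ≠ n - 1 →
      τ0 = 2 ^ ε0 *
        ∏ ℓ ∈ ((n - 1) / Nat.gcd (n - 1) l0).primeFactors.erase 2,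
          ℓ ^ (padicValNat ℓ (q - 1) - padicValNat ℓ l0)) :
    ∀ X : F, X ^ q ≠ X → ∀ j : ℕ, 1 ≤ j → f^[j] X = X → τ0 ∣ j := by
  intro X hX j hj hfix
  -- trivial case
  by_cases hgcd : Nat.gcd (n - 1) l0 = n - 1
  · rw [hτ0a hgcd]; exact one_dvd j
  rw [hτ0b hgcd]
  -- characteristic
  have hcharP : CharP F p := by
    have hcharP : CharP F (ringChar F) := ringChar.charP F
    obtain ⟨m, hm1, hm2⟩ := FiniteField.card F (ringChar F)
    have hdvd : ringChar F ∣ p := by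
      have h1 : ringChar F ∣ Fintype.card F := hm2 ▸ dvd_pow_self _ (by positivity)
      rw [hF, hq, ← pow_mul] at h1
      exact Nat.Prime.dvd_of_dvd_pow hm1 h1
    have : ringChar F = p := (Nat.prime_dvd_prime_iff_eq hm1 hp).1 hdvd
    rwa [this] at hcharP
  haveI := hcharP
  haveI : Fact p.Prime := ⟨hp⟩
  have hpodd' : Odd p := hp.odd_of_ne_two hpodd
  have hqodd : Odd q := hq ▸ hpodd'.pow
  have hq3 : 3 ≤ q := by
    have hp3 : 3 ≤ p := by
      obtain ⟨k, hk⟩ := hpodd'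
      have := hp.two_le
      omega
    have h1 : p ^ 1 ≤ p ^ s := Nat.pow_le_pow_right (by omega) hs
    rw [pow_one] at h1
    rw [hq]; omega
  -- Frobenius facts
  have hcard : ∀ x : F, x ^ q ^ 2 = x := by
    intro x; rw [← hF]; exact FiniteField.pow_card x
  have hqq : ∀ x : F, (x ^ q) ^ q = x := by
    intro x; rw [← pow_mul, ← sq]; exact hcard x
  have hadd : ∀ x y : F, (x + y) ^ q = x ^ q + y ^ q := by
    intro x y; rw [hq]; exact add_pow_char_pow x y p s
  have hneg : ∀ x : F, (-x) ^ q = -(x ^ q) := fun x => hqodd.neg_pow x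
  have hsub : ∀ x y : F, (x - y) ^ q = x ^ q - y ^ q := by
    intro x y
    rw [sub_eq_add_neg, hadd, hneg, sub_eq_add_neg]
  -- the trace-like quantity
  have hYq : ∀ Z : F, (Z ^ q - Z) ^ q = -(Z ^ q - Z) := by
    intro Z
    rw [hsub, hqq]
    ring
  have hne : Even (n - 1) := by
    obtain ⟨k, hk⟩ := hnodd
    exact ⟨k, by omega⟩
  -- key relation
  have hTf : ∀ Z : F, (f Z) ^ q - f Z = (a - c) * (Z ^ q - Z) ^ n := by
    intro Z
    have e1 : (c * Z ^ q + a * Z) ^ q = c * Z + a * Z ^ q := by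
      rw [hadd, mul_pow, mul_pow, hc, ha, hqq]
    have e2 : (((Z ^ q - Z) ^ (n - 1)) : F) ^ q = (Z ^ q - Z) ^ (n - 1) := by
      rw [← pow_mul, mul_comm, pow_mul, hYq, hne.neg_pow]
    have e3 : (Z ^ q - Z) ^ n = (Z ^ q - Z) * (Z ^ q - Z) ^ (n - 1) := by
      conv_lhs => rw [show n = 1 + (n - 1) by omega]
      rw [pow_add, pow_one]
    rw [hf Z, mul_pow, e1, e2, e3]
    ring
  -- iteration
  set Y := X ^ q - X with hYdef
  have hY0 : Y ≠ 0 := sub_ne_zero.2 hX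
  have hIter : ∀ k : ℕ, (f^[k] X) ^ q - f^[k] X
      = (a - c) ^ (∑ i ∈ Finset.range k, n ^ i) * Y ^ (n ^ k) := by
    intro k
    induction k with
    | zero => simp [hYdef]
    | succ k ih =>
      rw [Function.iterate_succ_apply', hTf, ih, mul_pow, ← pow_mul, ← pow_mul]
      have hEsucc : ∑ i ∈ Finset.range (k + 1), n ^ i
          = (∑ i ∈ Finset.range k, n ^ i) * n + 1 := by
        rw [Finset.sum_range_succ']
        simp only [pow_zero, pow_succ]
        rw [← Finset.sum_mul]
      rw [hEsucc, pow_succ n k, pow_add, pow_one]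
      ring
  -- the fixed-point equation
  set E := ∑ i ∈ Finset.range j, n ^ i with hEdef
  have hfixeq : (a - c) ^ E * Y ^ (n ^ j) = Y := by
    have := hIter j
    rw [hfix] at this
    rw [← this]
  have hnj1 : 1 ≤ n ^ j := Nat.one_le_pow _ _ (by omega)
  have h7 : (a - c) ^ E * Y ^ (n ^ j - 1) = 1 := by
    have hsplit : Y ^ (n ^ j) = Y * Y ^ (n ^ j - 1) := by
      conv_lhs => rw [show n ^ j = 1 + (n ^ j - 1) by omega]
      rw [pow_add, pow_one]
    rw [hsplit] at hfixeq
    have hcan : Y * ((a - c) ^ E * Y ^ (n ^ j - 1)) = Y * 1 := by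
      calc Y * ((a - c) ^ E * Y ^ (n ^ j - 1))
          = (a - c) ^ E * (Y * Y ^ (n ^ j - 1)) := by ring
        _ = Y := hfixeq
        _ = Y * 1 := (mul_one Y).symm
    exact mul_left_cancel₀ hY0 hcan
  -- β and t
  have hβ0 : β ≠ 0 := by
    rintro rfl
    exact hβ (by simp [zero_pow (by omega : q ≠ 0)])
  have hβq : β ^ q = -β := by
    have h1 : (β ^ q) ^ 2 = β ^ 2 := by
      rw [← pow_mul, mul_comm, pow_mul]; exact hβsq
    have h2 : (β ^ q - β) * (β ^ q + β) = 0 := by linear_combination h1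
    rcases mul_eq_zero.1 h2 with h | h
    · exact absurd (sub_eq_zero.1 h) hβ
    · linear_combination h
  -- t and v
  set t := Y * β⁻¹ with htdef
  have hYβt : Y = β * t := by
    rw [htdef]; field_simp
  have ht0 : t ≠ 0 := mul_ne_zero hY0 (inv_ne_zero hβ0)
  have hYqneg : Y ^ q = -Y := by rw [hYdef]; exact hYq X
  have htq : t ^ q = t := by
    rw [htdef, mul_pow, inv_pow, hYqneg, hβq, inv_neg]
    ring
  have h2ne : (2 : F) ≠ 0 := by
    intro h
    have h2 : ((2 : ℕ) : F) = 0 := by exact_mod_cast h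
    have hdvd2 : p ∣ 2 := (CharP.cast_eq_zero_iff F p 2).1 h2
    exact hpodd ((Nat.prime_dvd_prime_iff_eq hp Nat.prime_two).1 hdvd2)
  have h2pow : (2 : F) ^ q = 2 := by
    have h := hadd 1 1
    norm_num at h
    exact h
  set v := t * (2 : F)⁻¹ with hvdef
  have hv0 : v ≠ 0 := mul_ne_zero ht0 (inv_ne_zero h2ne)
  have hvq : v ^ q = v := by
    rw [hvdef, mul_pow, inv_pow, htq, h2pow]
  have hvpow : v ^ (q - 1) = 1 := by
    have h1 : v ^ (q - 1) * v = 1 * v := by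
      rw [← pow_succ, show q - 1 + 1 = q by omega, hvq, one_mul]
    exact mul_right_cancel₀ hv0 h1
  -- v is a power of α
  obtain ⟨rr, hrr⟩ : ∃ rr : ℕ, α ^ rr = v := by
    haveI : NeZero (q - 1) := ⟨by omega⟩
    set αu : Fˣ := Units.mk0 α hα0 with hαu
    set vu : Fˣ := Units.mk0 v hv0 with hvu
    have hord : orderOf αu = q - 1 := by
      rw [← orderOf_units]
      simpa [hαu] using hαord
    have hprim : IsPrimitiveRoot αu (q - 1) := hord ▸ IsPrimitiveRoot.orderOf αu
    have hmem : vu ∈ rootsOfUnity (q - 1) F := by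
      rw [mem_rootsOfUnity]
      ext
      push_cast [hvu]
      exact hvpow
    have hzmem : vu ∈ Subgroup.zpowers αu := by rw [hprim.zpowers_eq]; exact hmem
    obtain ⟨rr, hrr⟩ := mem_powers_iff_mem_zpowers.2 hzmem
    refine ⟨rr, ?_⟩
    have := congrArg (Units.val) hrr
    simpa [hαu, hvu] using this
  -- numeric exponent bookkeeping
  have hnjodd : Odd (n ^ j) := hnodd.pow
  set M := (n ^ j - 1) / 2 with hMdef
  have hM2 : M * 2 = n ^ j - 1 := by
    obtain ⟨k, hk⟩ := hnjodd
    rw [hMdef]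
    omega
  set m1 := (n - 1) / 2 with hm1def
  have hm1 : m1 * 2 = n - 1 := by
    obtain ⟨k, hk⟩ := hnodd
    rw [hm1def]
    omega
  have hgeom' : (n - 1) * E = n ^ j - 1 := by
    rw [hEdef]; exact aux_geom n (by omega) j
  have hm1E : m1 * E = M := by
    have hh : (m1 * E) * 2 = M * 2 := by
      calc (m1 * E) * 2 = (m1 * 2) * E := by ring
        _ = (n - 1) * E := by rw [hm1]
        _ = n ^ j - 1 := hgeom'
        _ = M * 2 := hM2.symm
    omega
  -- field computation
  have h8 : α ^ (l0 * E) = (4 : F) ^ M * (β ^ 2) ^ M * (a - c) ^ E := by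
    calc α ^ (l0 * E) = (α ^ l0) ^ E := by rw [pow_mul]
      _ = ((4 * β ^ 2) ^ m1 * (a - c)) ^ E := by rw [hl0]
      _ = (4 * β ^ 2) ^ (m1 * E) * (a - c) ^ E := by rw [mul_pow, ← pow_mul]
      _ = (4 : F) ^ M * (β ^ 2) ^ M * (a - c) ^ E := by rw [hm1E, mul_pow]
  have hYnj : Y ^ (n ^ j - 1) = (β ^ 2) ^ M * t ^ (2 * M) := by
    calc Y ^ (n ^ j - 1) = (Y ^ 2) ^ M := by
          rw [← pow_mul]; congr 1; omega
      _ = ((β * t) ^ 2) ^ M := by rw [← hYβt]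
      _ = (β ^ 2 * t ^ 2) ^ M := by rw [mul_pow]
      _ = (β ^ 2) ^ M * t ^ (2 * M) := by rw [mul_pow, ← pow_mul, ← pow_mul, pow_mul β 2 M]
  have h11 : α ^ (l0 * E) * t ^ (2 * M) = (4 : F) ^ M := by
    calc α ^ (l0 * E) * t ^ (2 * M)
        = (4 : F) ^ M * ((a - c) ^ E * ((β ^ 2) ^ M * t ^ (2 * M))) := by rw [h8]; ring
      _ = (4 : F) ^ M * ((a - c) ^ E * Y ^ (n ^ j - 1)) := by rw [hYnj]
      _ = (4 : F) ^ M := by rw [h7, mul_one]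
  have h12 : α ^ (l0 * E) * v ^ (2 * M) = 1 := by
    have h4 : (4 : F) = 2 ^ 2 := by norm_num
    calc α ^ (l0 * E) * v ^ (2 * M)
        = (α ^ (l0 * E) * t ^ (2 * M)) * ((2 : F) ^ (2 * M))⁻¹ := by
          rw [hvdef, mul_pow, inv_pow]; ring
      _ = (2 : F) ^ (2 * M) * ((2 : F) ^ (2 * M))⁻¹ := by
          rw [h11, h4, ← pow_mul]
      _ = 1 := mul_inv_cancel₀ (pow_ne_zero _ h2ne)
  have h13 : α ^ (l0 * E + rr * (2 * M)) = 1 := by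
    rw [pow_add, pow_mul α rr (2 * M), hrr]
    exact h12
  have hdvdnat : (q - 1) ∣ l0 * E + rr * (2 * M) := hαord ▸ orderOf_dvd_of_pow_eq_one h13
  have hfinal : (q - 1) ∣ E * (l0 + rr * (n - 1)) := by
    have h2M : 2 * M = (n - 1) * E := by omega
    have heq : E * (l0 + rr * (n - 1)) = l0 * E + rr * (2 * M) := by
      rw [h2M]; ring
    rw [heq]
    exact hdvdnat
  have := aux_nt q n l0 j rr ε0 hq3 hqodd hn3 hnodd hj hgcd (by rw [← hEdef]; exact hfinal)
    hε0a hε0b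
  exact this
end

section
/- Assume n is odd, n ≥ 3, and a ≠ c. Let X ∈ F_{q^2}, X ≠ 0, be a periodic point of f. Then τ0 divides the minimal period of X under f; and if moreover a + c ≠ 0 and X^q ≠ −X, then τ := lcm(ord((a+c)/(a−c)), τ0) divides the minimal period of X under f, where ord denotes multiplicative order in F_q^*. -/
private lemma geom_mul_eq {n : ℕ} (hn : 1 ≤ n) (k : ℕ) :
    (n - 1) * ∑ i ∈ Finset.range k, n ^ i = n ^ k - 1 := by
  induction k with
  | zero => simp
  | succ k ih =>
    rw [Finset.sum_range_succ, Nat.mul_add, ih]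
    have h1 : 1 ≤ n ^ k := Nat.one_le_pow _ _ (by omega)
    have h2 : n ^ (k + 1) = n * n ^ k := by rw [pow_succ]; ring
    have h3 : (n - 1) * n ^ k = n * n ^ k - 1 * n ^ k := Nat.sub_mul _ _ _
    have h4 : n ^ k ≤ n * n ^ k := Nat.le_mul_of_pos_left _ (by omega)
    omega

private lemma geom_parity {n : ℕ} (hn : n % 2 = 1) (k : ℕ) :
    (∑ i ∈ Finset.range k, n ^ i) % 2 = k % 2 := by
  induction k with
  | zero => simp
  | succ k ih =>
    rw [Finset.sum_range_succ]
    have h1 : n ^ k % 2 = 1 := Nat.odd_iff.1 ((Nat.odd_iff.2 hn).pow)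
    omega

private lemma keyA {G : Type*} [CommMonoid G] {x v : G} {d N M : ℕ} (hd : d ≠ 0)
    (hx : orderOf x = d) (hv : v ^ d = 1) (hN : N ≠ 0)
    (hrel : x ^ N * v ^ M = 1) {ℓ : ℕ} (hℓ : ℓ.Prime)
    (hM : ℓ ^ (padicValNat ℓ N + 1) ∣ M) :
    padicValNat ℓ d ≤ padicValNat ℓ N := by
  by_contra hlt
  push_neg at hlt
  set j := padicValNat ℓ N with hj
  set m := padicValNat ℓ d with hm
  have hdproj : ℓ ^ m ∣ d := by
    rw [hm, ← Nat.factorization_def d hℓ]; exact Nat.ordProj_dvd d ℓ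
  obtain ⟨Q, hQ⟩ := hdproj
  have hQ0 : Q ≠ 0 := by rintro rfl; simp [hQ] at hd
  have hQnd : ¬ ℓ ∣ Q := by
    intro hdvd
    have h1 : ℓ ^ (m + 1) ∣ d := by
      obtain ⟨t, rfl⟩ := hdvd; exact ⟨t, by rw [hQ]; ring⟩
    have h2 := (Nat.Prime.pow_dvd_iff_le_factorization hℓ hd).1 h1
    rw [Nat.factorization_def d hℓ] at h2; omega
  have hNproj : ℓ ^ j ∣ N := by
    rw [hj, ← Nat.factorization_def N hℓ]; exact Nat.ordProj_dvd N ℓ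
  obtain ⟨N', hN'⟩ := hNproj
  have hN'0 : N' ≠ 0 := by rintro rfl; simp [hN'] at hN
  have hN'nd : ¬ ℓ ∣ N' := by
    intro hdvd
    have h1 : ℓ ^ (j + 1) ∣ N := by
      obtain ⟨t, rfl⟩ := hdvd; exact ⟨t, by rw [hN']; ring⟩
    have h2 := (Nat.Prime.pow_dvd_iff_le_factorization hℓ hN).1 h1
    rw [Nat.factorization_def N hℓ] at h2; omega
  obtain ⟨M', hM'⟩ := hM
  set E := ℓ ^ (m - j - 1) * Q with hE
  have hME : M * E = d * M' := by
    rw [hM', hQ, hE]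
    have hpw : ℓ ^ (j + 1) * ℓ ^ (m - j - 1) = ℓ ^ m := by
      rw [← pow_add]; congr 1; omega
    calc ℓ ^ (j + 1) * M' * (ℓ ^ (m - j - 1) * Q)
        = ℓ ^ (j + 1) * ℓ ^ (m - j - 1) * Q * M' := by ring
      _ = ℓ ^ m * Q * M' := by rw [hpw]
  have hvME : v ^ (M * E) = 1 := by rw [hME, pow_mul, hv, one_pow]
  have hxNE : x ^ (N * E) = 1 := by
    have h1 : (x ^ N * v ^ M) ^ E = 1 := by rw [hrel, one_pow]
    rw [mul_pow, ← pow_mul, ← pow_mul, hvME, mul_one] at h1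
    exact h1
  have hdvd : d ∣ N * E := hx ▸ orderOf_dvd_of_pow_eq_one hxNE
  have hNE : N * E = ℓ ^ (m - 1) * (N' * Q) := by
    rw [hN', hE]
    have hpw : ℓ ^ j * ℓ ^ (m - j - 1) = ℓ ^ (m - 1) := by
      rw [← pow_add]; congr 1; omega
    calc ℓ ^ j * N' * (ℓ ^ (m - j - 1) * Q)
        = ℓ ^ j * ℓ ^ (m - j - 1) * (N' * Q) := by ring
      _ = ℓ ^ (m - 1) * (N' * Q) := by rw [hpw]
  have hlm : ℓ ^ m ∣ N * E := dvd_trans ⟨Q, hQ⟩ hdvd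
  rw [hNE, show m = (m - 1) + 1 by omega, pow_succ] at hlm
  have hfin : ℓ ∣ N' * Q :=
    (mul_dvd_mul_iff_left (a := ℓ ^ (m - 1)) (pow_ne_zero _ hℓ.ne_zero)).1 hlm
  rcases hℓ.dvd_mul.1 hfin with h | h
  · exact hN'nd h
  · exact hQnd h

private lemma prod_pp_dvd {S : Finset ℕ} (hpr : ∀ ℓ ∈ S, ℓ.Prime) {e : ℕ → ℕ} {k : ℕ}
    (h : ∀ ℓ ∈ S, ℓ ^ e ℓ ∣ k) : (∏ ℓ ∈ S, ℓ ^ e ℓ) ∣ k := by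
  induction S using Finset.induction_on with
  | empty => simpa using one_dvd k
  | @insert a s hna ih =>
    rw [Finset.prod_insert hna]
    have hap : a.Prime := hpr a (Finset.mem_insert_self a s)
    refine Nat.Coprime.mul_dvd_of_dvd_of_dvd ?_ (h a (Finset.mem_insert_self a s))
      (ih (fun ℓ hℓ => hpr ℓ (Finset.mem_insert_of_mem hℓ))
          (fun ℓ hℓ => h ℓ (Finset.mem_insert_of_mem hℓ)))
    apply Nat.Coprime.pow_left
    apply Nat.Coprime.prod_right
    intro i hi
    exact Nat.Coprime.pow_right _
      ((Nat.coprime_primes hap (hpr i (Finset.mem_insert_of_mem hi))).2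
        (fun hai => hna (hai ▸ hi)))

private lemma core_nt {G : Type*} [CommMonoid G] (x v : G) (d : ℕ)
    (hd2 : 2 ≤ d) (hdeven : Even d) (hx : orderOf x = d) (hv : v ^ d = 1)
    (n l0 k : ℕ) (hn3 : 3 ≤ n) (hnodd : Odd n) (hk : 1 ≤ k)
    (hrel : x ^ (l0 * ∑ i ∈ Finset.range k, n ^ i) * v ^ (n ^ k - 1) = 1)
    (ε0 : ℕ) (hε0a : Even l0 → ε0 = 0)
    (hε0b : Odd l0 → ε0 = padicValNat 2 d - padicValNat 2 ((n + 1) / 2))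
    (τ0 : ℕ) (hτ0a : Nat.gcd (n - 1) l0 = n - 1 → τ0 = 1)
    (hτ0b : Nat.gcd (n - 1) l0 ≠ n - 1 →
      τ0 = 2 ^ ε0 * ∏ ℓ ∈ ((n - 1) / Nat.gcd (n - 1) l0).primeFactors.erase 2,
          ℓ ^ (padicValNat ℓ d - padicValNat ℓ l0)) :
    τ0 ∣ k := by
  by_cases hg : Nat.gcd (n - 1) l0 = n - 1
  · rw [hτ0a hg]; exact one_dvd k
  rw [hτ0b hg]
  have hl0ne : l0 ≠ 0 := by rintro rfl; exact hg (Nat.gcd_zero_right _)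
  set S := ∑ i ∈ Finset.range k, n ^ i with hSdef
  have hSpos : 0 < S :=
    Finset.sum_pos (fun i _ => pow_pos (by omega) i) ⟨0, Finset.mem_range.2 (by omega)⟩
  have hM : (n - 1) * S = n ^ k - 1 := geom_mul_eq (by omega) k
  have hMpos : 0 < n ^ k - 1 := by
    have h3 : 3 ≤ n ^ k := le_trans hn3 (Nat.le_self_pow (by omega) n)
    omega
  have hdne : d ≠ 0 := by omega
  haveI : Fact (Nat.Prime 2) := ⟨Nat.prime_two⟩
  have hd1 : 1 ≤ padicValNat 2 d := one_le_padicValNat_of_dvd (by omega) hdeven.two_dvd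
  have hnodd' : n % 2 = 1 := Nat.odd_iff.1 hnodd
  -- the 2-part
  have h2dvd : 2 ^ ε0 ∣ k := by
    rcases Nat.even_or_odd l0 with hEv | hO
    · rw [hε0a hEv, pow_zero]; exact one_dvd k
    · have hl0v2 : padicValNat 2 l0 = 0 := by
        apply padicValNat.eq_zero_of_not_dvd
        have := Nat.odd_iff.1 hO; omega
      have hNne : l0 * S ≠ 0 := Nat.mul_ne_zero hl0ne (by omega)
      have hvN : padicValNat 2 (l0 * S) = padicValNat 2 S := by
        rw [padicValNat.mul hl0ne (by omega), hl0v2, zero_add]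
      have hMv : padicValNat 2 (n ^ k - 1) = padicValNat 2 (n - 1) + padicValNat 2 S := by
        rw [← hM, padicValNat.mul (by omega) (by omega)]
      have hn1v : 1 ≤ padicValNat 2 (n - 1) :=
        one_le_padicValNat_of_dvd (by omega) (by omega)
      have hMdvd : 2 ^ (padicValNat 2 (l0 * S) + 1) ∣ n ^ k - 1 := by
        apply (Nat.Prime.pow_dvd_iff_le_factorization Nat.prime_two (by omega)).2
        rw [Nat.factorization_def _ Nat.prime_two]
        omega
      have hkey := keyA hdne hx hv hNne hrel Nat.prime_two hMdvd
      rw [hvN] at hkey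
      have hkeven : k % 2 = 0 := by
        by_contra hko
        have hk1 : k % 2 = 1 := by omega
        have hS1 : S % 2 = 1 := by rw [geom_parity hnodd' k]; exact hk1
        have hSv : padicValNat 2 S = 0 := padicValNat.eq_zero_of_not_dvd (by omega)
        omega
      have hlte := padicValNat.pow_two_sub_pow (x := n) (y := 1) (by omega) (by omega)
        (by omega) (n := k) (by omega) (Nat.even_iff.2 hkeven)
      simp only [one_pow] at hlte
      have hn1half : padicValNat 2 (n + 1) = padicValNat 2 ((n + 1) / 2) + 1 := by
        have h2d : 2 ∣ n + 1 := by omega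
        obtain ⟨t, ht⟩ := h2d
        have ht0 : t ≠ 0 := by omega
        rw [ht, Nat.mul_div_cancel_left t (by omega), padicValNat.mul (by omega) ht0,
          padicValNat.self (by omega)]
        omega
      rw [hε0b hO]
      have hfin : padicValNat 2 d - padicValNat 2 ((n + 1) / 2) ≤ padicValNat 2 k := by
        omega
      exact dvd_trans (pow_dvd_pow 2 hfin) pow_padicValNat_dvd
  -- the odd part
  have hodd : ∀ ℓ ∈ ((n - 1) / Nat.gcd (n - 1) l0).primeFactors.erase 2,
      ℓ ^ (padicValNat ℓ d - padicValNat ℓ l0) ∣ k := by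
    intro ℓ hℓmem
    obtain ⟨hℓ2, hℓmem'⟩ := Finset.mem_erase.1 hℓmem
    obtain ⟨hℓp, hℓdvd, -⟩ := Nat.mem_primeFactors.1 hℓmem'
    haveI : Fact ℓ.Prime := ⟨hℓp⟩
    have hg1 : Nat.gcd (n - 1) l0 ∣ n - 1 := Nat.gcd_dvd_left _ _
    have hℓn1 : ℓ ∣ n - 1 := hℓdvd.trans (Nat.div_dvd_of_dvd hg1)
    have hℓn : ¬ ℓ ∣ n := by
      intro h
      have h1 := Nat.dvd_sub h hℓn1
      rw [show n - (n - 1) = 1 by omega] at h1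
      have := Nat.dvd_one.1 h1
      have := hℓp.two_le
      omega
    have hvgcd : padicValNat ℓ (Nat.gcd (n - 1) l0)
        = min (padicValNat ℓ (n - 1)) (padicValNat ℓ l0) := by
      have h1 := Nat.factorization_gcd (show n - 1 ≠ 0 by omega) hl0ne
      have h2 := DFunLike.congr_fun h1 ℓ
      rw [Finsupp.inf_apply] at h2
      rw [← Nat.factorization_def _ hℓp, h2, Nat.factorization_def _ hℓp,
        Nat.factorization_def _ hℓp]
    have hlt : padicValNat ℓ l0 < padicValNat ℓ (n - 1) := by
      by_contra hge
      push_neg at hge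
      have hmul : Nat.gcd (n - 1) l0 * ℓ ∣ n - 1 := (Nat.dvd_div_iff_mul_dvd hg1).1 hℓdvd
      have hpowdvd : ℓ ^ (padicValNat ℓ (Nat.gcd (n - 1) l0) + 1) ∣ n - 1 := by
        rw [pow_succ]
        exact dvd_trans (mul_dvd_mul pow_padicValNat_dvd dvd_rfl) hmul
      have h3 := (Nat.Prime.pow_dvd_iff_le_factorization hℓp (by omega)).1 hpowdvd
      rw [Nat.factorization_def _ hℓp] at h3
      omega
    have hlte := padicValNat.pow_sub_pow (p := ℓ) (hℓp.odd_of_ne_two hℓ2)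
      (x := n) (y := 1) (by omega) (by simpa using hℓn1) hℓn (n := k) (by omega)
    simp only [one_pow] at hlte
    have hMv : padicValNat ℓ (n ^ k - 1) = padicValNat ℓ (n - 1) + padicValNat ℓ S := by
      rw [← hM, padicValNat.mul (by omega) (by omega)]
    have hvN : padicValNat ℓ (l0 * S) = padicValNat ℓ l0 + padicValNat ℓ S :=
      padicValNat.mul hl0ne (by omega)
    have hMdvd : ℓ ^ (padicValNat ℓ (l0 * S) + 1) ∣ n ^ k - 1 := by
      apply (Nat.Prime.pow_dvd_iff_le_factorization hℓp (by omega)).2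
      rw [Nat.factorization_def _ hℓp]
      omega
    have hkey := keyA hdne hx hv (Nat.mul_ne_zero hl0ne (by omega)) hrel hℓp hMdvd
    have hfin : padicValNat ℓ d - padicValNat ℓ l0 ≤ padicValNat ℓ k := by omega
    exact dvd_trans (pow_dvd_pow ℓ hfin) pow_padicValNat_dvd
  have hprod := prod_pp_dvd
    (fun ℓ h => (Nat.mem_primeFactors.1 (Finset.mem_erase.1 h).2).1) hodd
  refine Nat.Coprime.mul_dvd_of_dvd_of_dvd ?_ h2dvd hprod
  apply Nat.Coprime.pow_left
  apply Nat.Coprime.prod_right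
  intro i hi
  obtain ⟨hi2, hi'⟩ := Finset.mem_erase.1 hi
  exact Nat.Coprime.pow_right _
    ((Nat.coprime_primes Nat.prime_two (Nat.mem_primeFactors.1 hi').1).2 (Ne.symm hi2))

/-- `n` odd, `n ≥ 3`, `a ≠ c`. If `X ≠ 0` is periodic, then `τ0` divides
its minimal period; and if moreover `a + c ≠ 0` and `X^q ≠ -X`, then
`τ = lcm(ord((a+c)/(a-c)), τ0)` divides its minimal period. -/
theorem stmt_15 (p s q : ℕ) (hp : p.Prime) (hpodd : p ≠ 2) (hs : 0 < s) (hq : q = p ^ s)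
    (F : Type*) [Field F] [Fintype F] (hF : Fintype.card F = q ^ 2)
    (a c : F) (ha : a ^ q = a) (hc : c ^ q = c)
    (n : ℕ) (hn3 : 3 ≤ n) (hnodd : Odd n)
    (hac : a ≠ c)
    (f : F → F) (hf : ∀ X, f X = (c * X ^ q + a * X) * (X ^ q - X) ^ (n - 1))
    (β : F) (hβ : β ^ q ≠ β) (hβsq : (β ^ 2) ^ q = β ^ 2)
    (α : F) (hαq : α ^ q = α) (hα0 : α ≠ 0) (hαord : orderOf α = q - 1)
    (l0 : ℕ) (hl0 : (4 * β ^ 2) ^ ((n - 1) / 2) * (a - c) = α ^ l0)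
    (hl0min : ∀ m : ℕ, (4 * β ^ 2) ^ ((n - 1) / 2) * (a - c) = α ^ m → l0 ≤ m)
    (ε0 : ℕ)
    (hε0a : Even l0 → ε0 = 0)
    (hε0b : Odd l0 → ε0 = padicValNat 2 (q - 1) - padicValNat 2 ((n + 1) / 2))
    (τ0 : ℕ)
    (hτ0a : Nat.gcd (n - 1) l0 = n - 1 → τ0 = 1)
    (hτ0b : Nat.gcd (n - 1) l0 ≠ n - 1 →
      τ0 = 2 ^ ε0 *
        ∏ ℓ ∈ ((n - 1) / Nat.gcd (n - 1) l0).primeFactors.erase 2,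
          ℓ ^ (padicValNat ℓ (q - 1) - padicValNat ℓ l0)) :
    ∀ X : F, X ≠ 0 → (∃ k : ℕ, 1 ≤ k ∧ f^[k] X = X) →
      τ0 ∣ Function.minimalPeriod f X ∧
      (a + c ≠ 0 → X ^ q ≠ -X →
        Nat.lcm (orderOf ((a + c) / (a - c))) τ0 ∣ Function.minimalPeriod f X) := by
  intro X hX0 hper
  obtain ⟨k0, hk01, hk0⟩ := hper
  -- numerics
  have hq1 : 1 < q := by rw [hq]; exact Nat.one_lt_pow (by omega) hp.one_lt
  have hqodd : Odd q := by rw [hq]; exact (hp.odd_of_ne_two hpodd).pow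
  have hq0 : q ≠ 0 := by omega
  have hq3 : 3 ≤ q := by obtain ⟨t, ht⟩ := hqodd; omega
  have hd2 : 2 ≤ q - 1 := by omega
  have hdeven : Even (q - 1) := Nat.Odd.sub_odd hqodd odd_one
  have hne : Even (n - 1) := Nat.Odd.sub_odd hnodd odd_one
  have hhalf : 2 * ((n - 1) / 2) = n - 1 := Nat.mul_div_cancel' hne.two_dvd
  -- characteristic
  haveI hfactp : Fact p.Prime := ⟨hp⟩
  have hchar : CharP F p := by
    haveI hrc : CharP F (ringChar F) := ringChar.charP F
    have h1 : (ringChar F).Prime := CharP.char_is_prime F (ringChar F)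
    obtain ⟨m, -, hcard⟩ := FiniteField.card F (ringChar F)
    have h2 : ringChar F ∣ q ^ 2 := by
      rw [← hF, hcard]; exact dvd_pow_self _ (by positivity)
    rw [hq, ← pow_mul] at h2
    have h3 : ringChar F ∣ p := h1.dvd_of_dvd_pow h2
    have h4 : ringChar F = p := (Nat.prime_dvd_prime_iff_eq h1 hp).1 h3
    exact h4 ▸ hrc
  haveI := hchar
  -- Frobenius facts
  have hadd : ∀ x y : F, (x + y) ^ q = x ^ q + y ^ q := by
    intro x y; rw [hq]; exact add_pow_char_pow x y p s
  have hsub : ∀ x y : F, (x - y) ^ q = x ^ q - y ^ q := by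
    intro x y
    rw [sub_eq_add_neg, hadd, hqodd.neg_pow, ← sub_eq_add_neg]
  have hq2fix : ∀ x : F, (x ^ q) ^ q = x := by
    intro x
    rw [← pow_mul, ← pow_two, ← hF]
    exact FiniteField.pow_card x
  have h2q : (2 : F) ^ q = 2 := by
    rw [show (2 : F) = 1 + 1 by norm_num, hadd, one_pow]
  have h2ne : (2 : F) ≠ 0 := by
    intro h
    have h1 : ((2 : ℕ) : F) = 0 := by exact_mod_cast h
    have h2 : p ∣ 2 := (CharP.cast_eq_zero_iff F p 2).1 h1
    exact hpodd ((Nat.prime_dvd_prime_iff_eq hp Nat.prime_two).1 h2)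
  have hβ0 : β ≠ 0 := by
    intro h; exact hβ (by rw [h, zero_pow hq0])
  have hβq : β ^ q = -β := by
    have h1 : (β ^ q) ^ 2 = β ^ 2 := by rw [← pow_mul, mul_comm, pow_mul, hβsq]
    have h2 : (β ^ q - β) * (β ^ q + β) = 0 := by
      have h3 : (β ^ q - β) * (β ^ q + β) = (β ^ q) ^ 2 - β ^ 2 := by ring
      rw [h3, h1, sub_self]
    rcases mul_eq_zero.1 h2 with h | h
    · exact absurd (sub_eq_zero.1 h) hβ
    · exact eq_neg_of_add_eq_zero_left h
  have h2β : (2 : F) * β ≠ 0 := mul_ne_zero h2ne hβ0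
  have h2βq : ((2 : F) * β) ^ q = -((2 : F) * β) := by
    rw [mul_pow, h2q, hβq]; ring
  have hac' : a - c ≠ 0 := sub_ne_zero.2 hac
  have h4ne : (4 : F) ≠ 0 := by
    rw [show (4 : F) = 2 * 2 by norm_num]; exact mul_ne_zero h2ne h2ne
  have hpow2β : ((2 : F) * β) ^ (n - 1) = (4 * β ^ 2) ^ ((n - 1) / 2) := by
    rw [show (4 : F) * β ^ 2 = ((2 : F) * β) ^ 2 by ring, ← pow_mul, hhalf]
  -- orbit facts
  have hf0 : f 0 = 0 := by
    rw [hf]; rw [zero_pow hq0]; ring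
  have horb : ∀ i, f^[i] X ≠ 0 := by
    intro i hzero
    have hXper : ∀ j : ℕ, f^[j * k0] X = X := by
      intro j
      induction j with
      | zero => simp
      | succ j ih =>
        rw [Nat.succ_mul, Function.iterate_add_apply, hk0, ih]
    have hti : i ≤ (i + 1) * k0 := by
      have : i + 1 ≤ (i + 1) * k0 := Nat.le_mul_of_pos_right _ (by omega)
      omega
    have hXt : X = f^[(i + 1) * k0] X := (hXper (i + 1)).symm
    rw [show (i + 1) * k0 = ((i + 1) * k0 - i) + i by omega,
      Function.iterate_add_apply, hzero, Function.iterate_fixed hf0] at hXt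
    exact hX0 hXt
  have hDorb : ∀ i, (f^[i] X) ^ q ≠ f^[i] X := by
    intro i h
    apply horb (i + 1)
    rw [Function.iterate_succ_apply', hf, h, sub_self,
      zero_pow (show n - 1 ≠ 0 by omega), mul_zero]
  -- Frobenius of f
  have hfq : ∀ Y : F, (f Y) ^ q = (c * Y + a * Y ^ q) * (Y ^ q - Y) ^ (n - 1) := by
    intro Y
    rw [hf Y, mul_pow]
    have h1 : (c * Y ^ q + a * Y) ^ q = c * Y + a * Y ^ q := by
      rw [hadd, mul_pow, mul_pow, hc, ha, hq2fix]
    have h2 : ((Y ^ q - Y) ^ (n - 1)) ^ q = (Y ^ q - Y) ^ (n - 1) := by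
      rw [← pow_mul, mul_comm (n - 1) q, pow_mul, hsub, hq2fix]
      rw [show Y - Y ^ q = -(Y ^ q - Y) by ring, hne.neg_pow]
    rw [h1, h2]
  have key1 : ∀ Y : F, f Y - (f Y) ^ q = (a - c) * (Y - Y ^ q) * (Y ^ q - Y) ^ (n - 1) := by
    intro Y; rw [hfq, hf]; ring
  have key2 : ∀ Y : F, f Y + (f Y) ^ q = (a + c) * (Y + Y ^ q) * (Y ^ q - Y) ^ (n - 1) := by
    intro Y; rw [hfq, hf]; ring
  -- v-step
  have hVstep : ∀ Y : F, (f Y - (f Y) ^ q) / (2 * β)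
      = ((4 * β ^ 2) ^ ((n - 1) / 2) * (a - c)) * ((Y - Y ^ q) / (2 * β)) ^ n := by
    intro Y
    have e1 : (Y - Y ^ q) ^ n = (Y - Y ^ q) * (Y - Y ^ q) ^ (n - 1) := by
      conv_lhs => rw [show n = 1 + (n - 1) by omega]
      rw [pow_add, pow_one]
    have e2 : ((2 : F) * β) ^ n = ((2 : F) * β) * ((2 : F) * β) ^ (n - 1) := by
      conv_lhs => rw [show n = 1 + (n - 1) by omega]
      rw [pow_add, pow_one]
    rw [key1 Y, show Y ^ q - Y = -(Y - Y ^ q) by ring, hne.neg_pow, div_pow, e1, e2,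
      ← hpow2β]
    have hpne : ((2 : F) * β) ^ (n - 1) ≠ 0 := pow_ne_zero _ h2β
    field_simp
  -- v0
  set v0 : F := (X - X ^ q) / (2 * β) with hv0def
  have hXq : X ^ q ≠ X := by simpa using hDorb 0
  have hv0ne : v0 ≠ 0 := div_ne_zero (sub_ne_zero.2 (Ne.symm hXq)) h2β
  have hv0q : v0 ^ q = v0 := by
    rw [hv0def, div_pow, hsub, hq2fix, h2βq,
      show X ^ q - X = -(X - X ^ q) by ring, neg_div_neg_eq]
  have hv0d : v0 ^ (q - 1) = 1 := by
    have h1 : v0 ^ (q - 1) * v0 = 1 * v0 := by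
      rw [one_mul, ← pow_succ, show q - 1 + 1 = q by omega, hv0q]
    exact mul_right_cancel₀ hv0ne h1
  -- iteration formula for v
  have hVk : ∀ k : ℕ, (f^[k] X - (f^[k] X) ^ q) / (2 * β)
      = ((4 * β ^ 2) ^ ((n - 1) / 2) * (a - c)) ^ (∑ i ∈ Finset.range k, n ^ i)
        * v0 ^ (n ^ k) := by
    intro k
    induction k with
    | zero => simp [hv0def]
    | succ k ih =>
      rw [Function.iterate_succ_apply', hVstep (f^[k] X), ih]
      have hS : ∑ i ∈ Finset.range (k + 1), n ^ i
          = (∑ i ∈ Finset.range k, n ^ i) * n + 1 := by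
        rw [Finset.sum_range_succ', Finset.sum_mul]
        simp [pow_succ]
      have hv : v0 ^ n ^ (k + 1) = (v0 ^ n ^ k) ^ n := by
        rw [← pow_mul, ← pow_succ]
      rw [hS, pow_add, pow_one, pow_mul, hv, mul_pow]
      ring
  -- minimal period
  set m := Function.minimalPeriod f X with hmdef
  have hmpos : 0 < m :=
    Function.IsPeriodicPt.minimalPeriod_pos (show 0 < k0 by omega) hk0
  have hfm : f^[m] X = X := Function.iterate_minimalPeriod
  -- relation
  have hrelv : v0 = ((4 * β ^ 2) ^ ((n - 1) / 2) * (a - c)) ^ (∑ i ∈ Finset.range m, n ^ i)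
      * v0 ^ (n ^ m) := by
    have h1 := hVk m
    rw [hfm] at h1
    rw [← h1, hv0def]
  have hnm1 : 1 ≤ n ^ m := Nat.one_le_pow _ _ (by omega)
  have hrel1 : ((4 * β ^ 2) ^ ((n - 1) / 2) * (a - c)) ^ (∑ i ∈ Finset.range m, n ^ i)
      * v0 ^ (n ^ m - 1) = 1 := by
    have h1 : v0 ^ (n ^ m) = v0 ^ (n ^ m - 1) * v0 := by
      rw [← pow_succ, show n ^ m - 1 + 1 = n ^ m by omega]
    have h2 : (((4 * β ^ 2) ^ ((n - 1) / 2) * (a - c)) ^ (∑ i ∈ Finset.range m, n ^ i)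
        * v0 ^ (n ^ m - 1)) * v0 = 1 * v0 := by
      rw [one_mul, mul_assoc, ← h1, ← hrelv]
    exact mul_right_cancel₀ hv0ne h2
  have hrelα : α ^ (l0 * ∑ i ∈ Finset.range m, n ^ i) * v0 ^ (n ^ m - 1) = 1 := by
    rw [pow_mul, ← hl0]
    exact hrel1
  -- apply core number theory
  have hτ0m : τ0 ∣ m :=
    core_nt α v0 (q - 1) hd2 hdeven hαord hv0d n l0 m hn3 hnodd (by omega)
      hrelα ε0 hε0a hε0b τ0 hτ0a hτ0b
  refine ⟨hτ0m, fun hacp hXnq => ?_⟩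
  -- ratio part
  have hRstep : ∀ i : ℕ, (f^[i + 1] X + (f^[i + 1] X) ^ q) / (f^[i + 1] X - (f^[i + 1] X) ^ q)
      = ((a + c) / (a - c)) * ((f^[i] X + (f^[i] X) ^ q) / (f^[i] X - (f^[i] X) ^ q)) := by
    intro i
    have hD : (f^[i] X) ^ q - f^[i] X ≠ 0 := sub_ne_zero.2 (hDorb i)
    have hD' : f^[i] X - (f^[i] X) ^ q ≠ 0 := sub_ne_zero.2 (Ne.symm (hDorb i))
    have hDn : ((f^[i] X) ^ q - f^[i] X) ^ (n - 1) ≠ 0 := pow_ne_zero _ hD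
    rw [Function.iterate_succ_apply', key2 (f^[i] X), key1 (f^[i] X)]
    field_simp
  have hRk : ∀ k : ℕ, (f^[k] X + (f^[k] X) ^ q) / (f^[k] X - (f^[k] X) ^ q)
      = ((a + c) / (a - c)) ^ k * ((X + X ^ q) / (X - X ^ q)) := by
    intro k
    induction k with
    | zero => simp
    | succ k ih => rw [hRstep k, ih, pow_succ]; ring
  have h1 := hRk m
  rw [hfm] at h1
  have hR0 : (X + X ^ q) / (X - X ^ q) ≠ 0 := by
    refine div_ne_zero (fun h => hXnq ?_) (sub_ne_zero.2 (Ne.symm hXq))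
    exact eq_neg_of_add_eq_zero_right h
  have hρm : ((a + c) / (a - c)) ^ m = 1 := by
    have h2 : 1 * ((X + X ^ q) / (X - X ^ q))
        = ((a + c) / (a - c)) ^ m * ((X + X ^ q) / (X - X ^ q)) := by
      rw [one_mul, ← h1]
    exact (mul_right_cancel₀ hR0 h2).symm
  exact Nat.lcm_dvd (orderOf_dvd_of_pow_eq_one hρm) hτ0m
end

section
/- Assume n is odd, n ≥ 3, and a ≠ c. Then for every nonzero α ∈ F_{q^2}: if a + c = 0, the number of X ∈ F_{q^2} with f(X) = α is either 0 or q·𝔤(n); if a + c ≠ 0, the number of X ∈ F_{q^2} with f(X) = α is either 0 or 𝔤(n). -/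
private lemma count_roots_of_unity {F : Type*} [Field F] [Fintype F] {m : ℕ} (hm : 0 < m)
    (hdvd : m ∣ Fintype.card F - 1) : {w : F | w ^ m = 1}.ncard = m := by
  classical
  obtain ⟨g, hg⟩ := IsCyclic.exists_generator (α := Fˣ)
  have h1 : 1 < Fintype.card F := Fintype.one_lt_card
  have hN : Fintype.card F - 1 ≠ 0 := by omega
  have horder : orderOf g = Fintype.card F - 1 := by
    rw [orderOf_eq_card_of_forall_mem_zpowers hg, Nat.card_eq_fintype_card, Fintype.card_units]
  have hdvd2 : (Fintype.card F - 1) / m ∣ (Fintype.card F - 1) := Nat.div_dvd_of_dvd hdvd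
  have horder2 : orderOf (g ^ ((Fintype.card F - 1) / m)) = m := by
    rw [orderOf_pow, horder, Nat.gcd_eq_right hdvd2, Nat.div_div_self hdvd hN]
  have hprim : IsPrimitiveRoot ((g ^ ((Fintype.card F - 1) / m) : Fˣ) : F) m := by
    rw [IsPrimitiveRoot.coe_units_iff]
    conv_rhs => rw [← horder2]
    exact IsPrimitiveRoot.orderOf _
  have hset : {w : F | w ^ m = 1} = ↑(Polynomial.nthRootsFinset m (1 : F)) := by
    ext x
    simp [Polynomial.mem_nthRootsFinset hm]
  rw [hset, Set.ncard_coe_finset, hprim.card_nthRootsFinset]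

/-- `n` odd, `n ≥ 3`, `a ≠ c`. For every nonzero `α`: if `a + c = 0`, the
preimage of `α` has `0` or `q·𝔤(n)` elements; if `a + c ≠ 0`, it has `0` or `𝔤(n)`
elements. -/
theorem stmt_18 (p s q : ℕ) (hp : p.Prime) (hpodd : p ≠ 2) (hs : 0 < s) (hq : q = p ^ s)
    (F : Type*) [Field F] [Fintype F] (hF : Fintype.card F = q ^ 2)
    (a c : F) (ha : a ^ q = a) (hc : c ^ q = c)
    (n : ℕ) (hn3 : 3 ≤ n) (hnodd : Odd n)
    (hac : a ≠ c)
    (f : F → F) (hf : ∀ X, f X = (c * X ^ q + a * X) * (X ^ q - X) ^ (n - 1)) :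
    ∀ α : F, α ≠ 0 →
      (a + c = 0 →
        (f ⁻¹' {α}).ncard = 0 ∨ (f ⁻¹' {α}).ncard = q * Nat.gcd n (q - 1)) ∧
      (a + c ≠ 0 →
        (f ⁻¹' {α}).ncard = 0 ∨ (f ⁻¹' {α}).ncard = Nat.gcd n (q - 1)) := by
  classical
  -- basic numerics
  have hq2 : 2 ≤ q := by
    rw [hq]
    calc 2 ≤ p := hp.two_le
    _ ≤ p ^ s := Nat.le_self_pow hs.ne' p
  have hqne : q ≠ 0 := by omega
  -- characteristic
  haveI hFact : Fact p.Prime := ⟨hp⟩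
  haveI hcharF : CharP F p := by
    haveI := ringChar.charP F
    have hrp : (ringChar F).Prime := CharP.char_is_prime F (ringChar F)
    obtain ⟨n', hrp', hn'⟩ := FiniteField.card F (ringChar F)
    have hdvd : p ∣ (ringChar F) ^ (n' : ℕ) := by
      rw [← hn', hF, hq, ← pow_mul]
      exact dvd_pow_self p (by positivity)
    have : p = ringChar F := by
      rw [← Nat.prime_dvd_prime_iff_eq hp hrp]
      exact hp.dvd_of_dvd_pow hdvd
    rw [this]
    exact ringChar.charP F
  have frob_add : ∀ x y : F, (x + y) ^ q = x ^ q + y ^ q := by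
    intro x y; rw [hq]; exact add_pow_char_pow x y p s
  have frob_sub : ∀ x y : F, (x - y) ^ q = x ^ q - y ^ q := by
    intro x y; rw [hq]; exact sub_pow_char_pow x y s
  have frob_frob : ∀ x : F, (x ^ q) ^ q = x := by
    intro x
    rw [← pow_mul, ← pow_two, ← hF]
    exact FiniteField.pow_card x
  have hLq : ∀ X : F, (X ^ q - X) ^ q = -(X ^ q - X) := by
    intro X
    rw [frob_sub, frob_frob]
    ring
  -- numerics about n
  have hm2 : 2 ≤ n - 1 := by omega
  have heven : Even (n - 1) := Nat.Odd.sub_odd hnodd odd_one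
  have hpow : ∀ t : F, t ^ n = t * t ^ (n - 1) := by
    intro t
    conv_lhs => rw [show n = (n - 1) + 1 by omega]
    rw [pow_succ']
  -- gcd facts
  set g := Nat.gcd n (q - 1) with hgdef
  have hg0 : 0 < g := Nat.gcd_pos_of_pos_right n (by omega)
  have hgdvd : g ∣ Fintype.card F - 1 := by
    rw [hF]
    refine dvd_trans (Nat.gcd_dvd_right n (q - 1)) ⟨q + 1, ?_⟩
    have h1 : 1 ≤ q ^ 2 := Nat.one_le_pow 2 q (by omega)
    zify [h1, show 1 ≤ q by omega]
    ring
  have hq1dvd : q - 1 ∣ Fintype.card F - 1 := by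
    rw [hF]
    refine ⟨q + 1, ?_⟩
    have h1 : 1 ≤ q ^ 2 := Nat.one_le_pow 2 q (by omega)
    zify [h1, show 1 ≤ q by omega]
    ring
  have hWcard : {w : F | w ^ g = 1}.ncard = g := count_roots_of_unity hg0 hgdvd
  -- the subfield K
  have hKcard : {x : F | x ^ q = x}.ncard = q := by
    have hset : {x : F | x ^ q = x} = insert (0:F) {w : F | w ^ (q-1) = 1} := by
      ext x
      simp only [Set.mem_setOf_eq, Set.mem_insert_iff]
      constructor
      · intro hx
        by_cases hx0 : x = 0
        · exact Or.inl hx0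
        · right
          have : x ^ (q - 1) * x = 1 * x := by
            rw [← pow_succ, show q - 1 + 1 = q by omega, hx, one_mul]
          exact mul_right_cancel₀ hx0 this
      · rintro (rfl | hx)
        · simp [zero_pow hqne]
        · rw [show q = (q-1) + 1 by omega, pow_succ, hx, one_mul]
    rw [hset, Set.ncard_insert_of_notMem (by simp [zero_pow (show q - 1 ≠ 0 by omega)]),
      count_roots_of_unity (show 0 < q - 1 by omega) hq1dvd]
    omega
  -- membership in W
  have hWmem : ∀ w : F, w ^ g = 1 → (w ^ q = w ∧ w ^ n = 1 ∧ w ≠ 0) := by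
    intro w hw
    obtain ⟨k1, hk1⟩ := Nat.gcd_dvd_left n (q - 1)
    obtain ⟨k2, hk2⟩ := Nat.gcd_dvd_right n (q - 1)
    have hwn : w ^ n = 1 := by rw [hk1, pow_mul, hw, one_pow]
    have hwq1 : w ^ (q - 1) = 1 := by rw [hk2, pow_mul, hw, one_pow]
    refine ⟨?_, hwn, ?_⟩
    · rw [show q = (q-1) + 1 by omega, pow_succ, hwq1, one_mul]
    · intro h0
      rw [h0, zero_pow hg0.ne'] at hw
      exact zero_ne_one hw
  have hWmem' : ∀ w : F, w ≠ 0 → w ^ q = w → w ^ n = 1 → w ^ g = 1 := by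
    intro w hw0 hwq hwn
    have h1 : w ^ (q - 1) = 1 := by
      have : w ^ (q - 1) * w = 1 * w := by
        rw [← pow_succ, show q - 1 + 1 = q by omega, hwq, one_mul]
      exact mul_right_cancel₀ hw0 this
    have hd : orderOf w ∣ g :=
      Nat.dvd_gcd (orderOf_dvd_of_pow_eq_one hwn) (orderOf_dvd_of_pow_eq_one h1)
    exact orderOf_dvd_iff_pow_eq_one.mp hd
  -- rewriting f
  have hfr : ∀ X : F, f X = ((a + c) * X + c * (X ^ q - X)) * (X ^ q - X) ^ (n - 1) := by
    intro X; rw [hf X]; ring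
  -- W element from two exponents
  have hWof : ∀ t t₀ : F, t ≠ 0 → t₀ ≠ 0 → t ^ q = -t → t₀ ^ q = -t₀ →
      t * t ^ (n - 1) = t₀ * t₀ ^ (n - 1) → (t * t₀⁻¹) ^ g = 1 := by
    intro t t₀ ht ht0 htq ht0q htt
    have hw0 : t * t₀⁻¹ ≠ 0 := mul_ne_zero ht (inv_ne_zero ht0)
    have htn : t ^ n = t₀ ^ n := by rw [hpow, hpow, htt]
    refine hWmem' _ hw0 ?_ ?_
    · rw [mul_pow, htq, inv_pow, ht0q]
      field_simp
    · rw [mul_pow, inv_pow, htn, mul_inv_cancel₀ (pow_ne_zero n ht0)]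
  intro α hα
  -- key Frobenius relation
  have hkey : ∀ X : F, f X = α →
      (a - c) * ((X ^ q - X) * (X ^ q - X) ^ (n - 1)) = α ^ q - α := by
    intro X hX
    have hac' : (a + c) ^ q = a + c := by rw [frob_add a c, ha, hc]
    have E2 : ((a + c) * X + c * (X ^ q - X)) * (X ^ q - X) ^ (n - 1) = α := by
      rw [← hfr X, hX]
    have E1 : α ^ q
        = ((a + c) * X ^ q + c * (-(X ^ q - X))) * (X ^ q - X) ^ (n - 1) := by
      rw [← hX, hfr X, mul_pow, frob_add, mul_pow, mul_pow, hac', hc,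
        pow_right_comm, hLq X, Even.neg_pow heven]
    linear_combination -E1 - E2
  constructor
  · -- case a + c = 0
    intro hsum
    rcases Set.eq_empty_or_nonempty (f ⁻¹' {α}) with he | ⟨X₀, hX₀mem⟩
    · left; rw [he]; exact Set.ncard_empty F
    right
    have hfX₀ : f X₀ = α := hX₀mem
    have hc0 : c ≠ 0 := by
      intro h
      apply hac
      have : a = 0 := by rwa [h, add_zero] at hsum
      rw [this, h]
    have hfA : ∀ X : F, f X = c * ((X ^ q - X) * (X ^ q - X) ^ (n - 1)) := by
      intro X
      rw [hfr X]
      have : a + c = 0 := hsum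
      linear_combination ((X ^ q - X) ^ (n-1) * X) * this
    have hX₀eq : c * ((X₀ ^ q - X₀) * (X₀ ^ q - X₀) ^ (n - 1)) = α := by
      rw [← hfA X₀, hfX₀]
    have ht0 : X₀ ^ q - X₀ ≠ 0 := by
      intro h
      rw [h] at hX₀eq
      simp at hX₀eq
      exact hα hX₀eq.symm
    -- the representation map
    have hrep : ∀ k w : F, k ^ q = k → w ^ q = w →
        (w * X₀ + k) ^ q - (w * X₀ + k) = w * (X₀ ^ q - X₀) := by
      intro k w hk hw
      rw [frob_add, mul_pow, hk, hw]
      ring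
    have him : f ⁻¹' {α} =
        (fun z : F × F => z.2 * X₀ + z.1) '' ({x : F | x ^ q = x} ×ˢ {w : F | w ^ g = 1}) := by
      ext X
      simp only [Set.mem_preimage, Set.mem_singleton_iff, Set.mem_image, Set.mem_prod,
        Set.mem_setOf_eq, Prod.exists]
      constructor
      · intro hX
        have hXeq : c * ((X ^ q - X) * (X ^ q - X) ^ (n - 1)) = α := by rw [← hfA X, hX]
        have ht : X ^ q - X ≠ 0 := by
          intro h
          rw [h] at hXeq
          simp at hXeq
          exact hα hXeq.symm
        have htt : (X ^ q - X) * (X ^ q - X) ^ (n - 1)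
            = (X₀ ^ q - X₀) * (X₀ ^ q - X₀) ^ (n - 1) :=
          mul_left_cancel₀ hc0 (hXeq.trans hX₀eq.symm)
        obtain ⟨w, hwdef⟩ : ∃ w : F, w = (X ^ q - X) * (X₀ ^ q - X₀)⁻¹ := ⟨_, rfl⟩
        have hwW : w ^ g = 1 := by
          rw [hwdef]
          exact hWof _ _ ht ht0 (hLq X) (hLq X₀) htt
        obtain ⟨hwq, hwn, hw0⟩ := hWmem w hwW
        have hwt : w * (X₀ ^ q - X₀) = X ^ q - X := by
          rw [hwdef]
          field_simp
        refine ⟨X - w * X₀, w, ⟨?_, hwW⟩, by ring⟩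
        rw [frob_sub, mul_pow, hwq]
        linear_combination -hwt
      · rintro ⟨k, w, ⟨hk, hwW⟩, rfl⟩
        obtain ⟨hwq, hwn, hw0⟩ := hWmem w hwW
        rw [hfA, hrep k w hk hwq, mul_pow]
        have hwn' : w * w ^ (n - 1) = 1 := by rw [← hpow, hwn]
        linear_combination (w * w ^ (n - 1)) * hX₀eq + α * hwn'
    have hinj : Set.InjOn (fun z : F × F => z.2 * X₀ + z.1)
        ({x : F | x ^ q = x} ×ˢ {w : F | w ^ g = 1}) := by
      rintro ⟨k, w⟩ ⟨hk, hwW⟩ ⟨k', w'⟩ ⟨hk', hwW'⟩ hEq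
      obtain ⟨hwq, -, -⟩ := hWmem w hwW
      obtain ⟨hwq', -, -⟩ := hWmem w' hwW'
      simp only at hEq
      have h2 : w * (X₀ ^ q - X₀) = w' * (X₀ ^ q - X₀) := by
        rw [← hrep k w hk hwq, ← hrep k' w' hk' hwq', hEq]
      have hww : w = w' := mul_right_cancel₀ ht0 h2
      have hkk : k = k' := by
        rw [hww] at hEq
        exact add_left_cancel hEq
      simp [hww, hkk]
    rw [him, Set.ncard_image_of_injOn hinj]
    have hprodcard : ({x : F | x ^ q = x} ×ˢ {w : F | w ^ g = 1}).ncard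
        = {x : F | x ^ q = x}.ncard * {w : F | w ^ g = 1}.ncard := by
      rw [← Nat.card_coe_set_eq, ← Nat.card_coe_set_eq, ← Nat.card_coe_set_eq,
        Nat.card_congr (Equiv.Set.prod _ _), Nat.card_prod]
    rw [hprodcard, hKcard, hWcard]
  · -- case a + c ≠ 0
    intro hsum
    rcases Set.eq_empty_or_nonempty (f ⁻¹' {α}) with he | ⟨X₀, hX₀mem⟩
    · left; rw [he]; exact Set.ncard_empty F
    right
    have hfX₀ : f X₀ = α := hX₀mem
    have hX₀eq : ((a + c) * X₀ + c * (X₀ ^ q - X₀)) * (X₀ ^ q - X₀) ^ (n - 1) = α := by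
      rw [← hfr X₀, hfX₀]
    have ht0 : X₀ ^ q - X₀ ≠ 0 := by
      intro h
      rw [h, zero_pow (show n - 1 ≠ 0 by omega), mul_zero] at hX₀eq
      exact hα hX₀eq.symm
    have hX₀0 : X₀ ≠ 0 := by
      intro h
      apply ht0
      rw [h, zero_pow hqne, sub_zero]
    have hacne : a - c ≠ 0 := sub_ne_zero_of_ne hac
    have him : f ⁻¹' {α} = (fun w : F => w * X₀) '' {w : F | w ^ g = 1} := by
      ext X
      simp only [Set.mem_preimage, Set.mem_singleton_iff, Set.mem_image, Set.mem_setOf_eq]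
      constructor
      · intro hX
        have hXeq : ((a + c) * X + c * (X ^ q - X)) * (X ^ q - X) ^ (n - 1) = α := by
          rw [← hfr X, hX]
        have ht : X ^ q - X ≠ 0 := by
          intro h
          rw [h, zero_pow (show n - 1 ≠ 0 by omega), mul_zero] at hXeq
          exact hα hXeq.symm
        have htt : (X ^ q - X) * (X ^ q - X) ^ (n - 1)
            = (X₀ ^ q - X₀) * (X₀ ^ q - X₀) ^ (n - 1) :=
          mul_left_cancel₀ hacne ((hkey X hX).trans (hkey X₀ hfX₀).symm)
        obtain ⟨w, hwdef⟩ : ∃ w : F, w = (X ^ q - X) * (X₀ ^ q - X₀)⁻¹ := ⟨_, rfl⟩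
        have hwW : w ^ g = 1 := by
          rw [hwdef]
          exact hWof _ _ ht ht0 (hLq X) (hLq X₀) htt
        refine ⟨w, hwW, ?_⟩
        -- show w * X₀ = X
        have hE : (a + c) * (X * (X ^ q - X) ^ (n - 1))
            = (a + c) * (X₀ * (X₀ ^ q - X₀) ^ (n - 1)) := by
          linear_combination hXeq - hX₀eq - c * htt
        have hE' : X * (X ^ q - X) ^ (n - 1) = X₀ * (X₀ ^ q - X₀) ^ (n - 1) :=
          mul_left_cancel₀ hsum hE
        have h3 : (X * (X₀ ^ q - X₀)) * ((X ^ q - X) * (X ^ q - X) ^ (n - 1))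
            = (((X ^ q - X) * X₀)) * ((X ^ q - X) * (X ^ q - X) ^ (n - 1)) := by
          linear_combination ((X ^ q - X) * (X₀ ^ q - X₀)) * hE' - ((X ^ q - X) * X₀) * htt
        have h4 : X * (X₀ ^ q - X₀) = (X ^ q - X) * X₀ :=
          mul_right_cancel₀ (by
            intro h
            rw [← hpow] at h
            exact ht (pow_eq_zero_iff (show n ≠ 0 by omega) |>.mp h)) h3
        rw [hwdef]
        field_simp
        linear_combination h4.symm
      · rintro ⟨w, hwW, rfl⟩
        obtain ⟨hwq, hwn, hw0⟩ := hWmem w hwW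
        have hrep' : (w * X₀) ^ q - w * X₀ = w * (X₀ ^ q - X₀) := by
          rw [mul_pow, hwq]; ring
        rw [hfr, hrep', mul_pow]
        have hwn' : w * w ^ (n - 1) = 1 := by rw [← hpow, hwn]
        linear_combination (w * w ^ (n - 1)) * hX₀eq + α * hwn'
    have hinj : Set.InjOn (fun w : F => w * X₀) {w : F | w ^ g = 1} :=
      (mul_left_injective₀ hX₀0).injOn
    rw [him, Set.ncard_image_of_injOn hinj, hWcard]
end
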